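/- For every fixed N ∈ ℕ with N ≥ 1 and fixed l ≥ 1, the limit as R → ∞ of K_N(R,l)/(R·(ln R)^(l-1)) equals 1/(l-1)!, where K_N(R,l) is the number of l-tuples (n_1,...,n_l) with each n_i ≥ N and ∏ n_j ≤ R. -/

import Mathlib

open Finset Real Filter

namespace Stmt3

noncomputable def Kfin (N k : ℕ) (X : ℝ) : Finset (Fin k → ℕ) :=
  (Fintype.piFinset fun _ : Fin k => Finset.Icc N ⌊X⌋₊).filter fun v => ∏ i, (v i : ℝ) ≤ X

lemma one_le_cast_of {N n : ℕ} (hN : 1 ≤ N) (h : N ≤ n) : (1:ℝ) ≤ (n:ℝ) := by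
  exact_mod_cast hN.trans h

lemma single_le_prodR {N k : ℕ} (hN : 1 ≤ N) {v : Fin k → ℕ} (h1 : ∀ i, N ≤ v i) (i : Fin k) :
    (v i : ℝ) ≤ ∏ j, (v j : ℝ) := by
  have : v i ≤ ∏ j, v j :=
    Finset.single_le_prod' (fun j _ => hN.trans (h1 j)) (Finset.mem_univ i)
  calc (v i : ℝ) ≤ ((∏ j, v j : ℕ) : ℝ) := by exact_mod_cast this
    _ = ∏ j, (v j : ℝ) := by push_cast; ring

lemma one_le_prodR {N k : ℕ} (hN : 1 ≤ N) {v : Fin k → ℕ} (h1 : ∀ i, N ≤ v i) :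
    (1:ℝ) ≤ ∏ i, (v i : ℝ) := by
  have : 1 ≤ ∏ j, v j := Finset.one_le_prod' (fun j _ => hN.trans (h1 j))
  calc (1:ℝ) ≤ ((∏ j, v j : ℕ) : ℝ) := by exact_mod_cast this
    _ = ∏ j, (v j : ℝ) := by push_cast; ring

lemma prodR_pos {N k : ℕ} (hN : 1 ≤ N) {v : Fin k → ℕ} (h1 : ∀ i, N ≤ v i) :
    (0:ℝ) < ∏ i, (v i : ℝ) := lt_of_lt_of_le one_pos (one_le_prodR hN h1)

lemma mem_Kfin {N k : ℕ} (hN : 1 ≤ N) {X : ℝ} {v : Fin k → ℕ} :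
    v ∈ Kfin N k X ↔ (∀ i, N ≤ v i) ∧ ∏ i, (v i : ℝ) ≤ X := by
  simp only [Kfin, Finset.mem_filter, Fintype.mem_piFinset, Finset.mem_Icc]
  constructor
  · rintro ⟨h1, h2⟩
    exact ⟨fun i => (h1 i).1, h2⟩
  · rintro ⟨h1, h2⟩
    exact ⟨fun i => ⟨h1 i, Nat.le_floor ((single_le_prodR hN h1 i).trans h2)⟩, h2⟩

/-- splitting off the first coordinate -/
lemma sum_Kfin_succ {N k : ℕ} (hN : 1 ≤ N) {X : ℝ} (g : (Fin (k+1) → ℕ) → ℝ) :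
    ∑ v ∈ Kfin N (k+1) X, g v
      = ∑ n ∈ Finset.Icc N ⌊X⌋₊, ∑ w ∈ Kfin N k (X / n), g (Fin.cons n w) := by
  rw [Finset.sum_sigma']
  apply Finset.sum_nbij' (fun v => (⟨v 0, Fin.tail v⟩ : Σ _n : ℕ, Fin k → ℕ))
    (fun p => Fin.cons p.1 p.2)
  · intro v hv
    rw [mem_Kfin hN] at hv
    obtain ⟨h1, h2⟩ := hv
    have hv0 : (0:ℝ) < (v 0 : ℝ) := lt_of_lt_of_le one_pos (one_le_cast_of hN (h1 0))
    have hprod : (v 0 : ℝ) * ∏ i, (Fin.tail v i : ℝ) = ∏ i, (v i : ℝ) := by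
      rw [Fin.prod_univ_succ]; rfl
    simp only [Finset.mem_sigma, Finset.mem_Icc, mem_Kfin hN]
    refine ⟨⟨h1 0, Nat.le_floor ((single_le_prodR hN h1 0).trans h2)⟩,
      fun i => h1 i.succ, ?_⟩
    rw [le_div_iff₀ hv0, mul_comm, hprod]; exact h2
  · intro p hp
    simp only [Finset.mem_sigma, Finset.mem_Icc, mem_Kfin hN] at hp
    obtain ⟨⟨hn1, _⟩, hw1, hw2⟩ := hp
    have hn0 : (0:ℝ) < (p.1 : ℝ) := lt_of_lt_of_le one_pos (one_le_cast_of hN hn1)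
    rw [mem_Kfin hN]
    constructor
    · intro i
      refine Fin.cases ?_ ?_ i
      · simpa using hn1
      · intro j; simpa using hw1 j
    · have : ∏ i, ((Fin.cons p.1 p.2 : Fin (k+1) → ℕ) i : ℝ)
          = (p.1 : ℝ) * ∏ i, (p.2 i : ℝ) := by
        rw [Fin.prod_univ_succ]; simp
      rw [this, ← le_div_iff₀' hn0]
      exact hw2
  · intro v _; exact Fin.cons_self_tail v
  · intro p _; ext <;> simp
  · intro v _; rw [Fin.cons_self_tail]


noncomputable def Bs (N k : ℕ) (X : ℝ) : ℝ := ∑ v ∈ Kfin N k X, (∏ i, (v i : ℝ))⁻¹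

noncomputable def As (N k : ℕ) (X : ℝ) : ℝ := ((Kfin N k X).card : ℝ)

lemma Bs_nonneg (N k : ℕ) (X : ℝ) : 0 ≤ Bs N k X :=
  Finset.sum_nonneg fun v _ => inv_nonneg.mpr (Finset.prod_nonneg fun i _ => Nat.cast_nonneg _)

lemma As_nonneg (N k : ℕ) (X : ℝ) : 0 ≤ As N k X := Nat.cast_nonneg _

lemma Kfin_mono {N k : ℕ} (hN : 1 ≤ N) {X X' : ℝ} (h : X ≤ X') :
    Kfin N k X ⊆ Kfin N k X' := by
  intro v hv
  rw [mem_Kfin hN] at hv ⊢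
  exact ⟨hv.1, hv.2.trans h⟩

lemma Bs_mono {N k : ℕ} (hN : 1 ≤ N) {X X' : ℝ} (h : X ≤ X') : Bs N k X ≤ Bs N k X' :=
  Finset.sum_le_sum_of_subset_of_nonneg (Kfin_mono hN h)
    (fun v _ _ => inv_nonneg.mpr (Finset.prod_nonneg fun i _ => Nat.cast_nonneg _))

lemma As_le_mul_Bs {N k : ℕ} (hN : 1 ≤ N) {X : ℝ} (hX : 0 ≤ X) :
    As N k X ≤ X * Bs N k X := by
  rw [As, Bs, Finset.mul_sum, Finset.card_eq_sum_ones, Nat.cast_sum]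
  apply Finset.sum_le_sum
  intro v hv
  rw [mem_Kfin hN] at hv
  have hp := prodR_pos hN hv.1
  rw [Nat.cast_one, ← div_eq_mul_inv, le_div_iff₀ hp, one_mul]
  exact hv.2

lemma Bs_succ {N k : ℕ} (hN : 1 ≤ N) (X : ℝ) :
    Bs N (k+1) X = ∑ n ∈ Finset.Icc N ⌊X⌋₊, (n : ℝ)⁻¹ * Bs N k (X / n) := by
  rw [Bs, sum_Kfin_succ hN]
  apply Finset.sum_congr rfl
  intro n _
  rw [Bs, Finset.mul_sum]
  apply Finset.sum_congr rfl
  intro w _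
  rw [Fin.prod_univ_succ]
  simp [mul_inv, mul_comm]

lemma As_succ {N k : ℕ} (hN : 1 ≤ N) (X : ℝ) :
    As N (k+1) X = ∑ n ∈ Finset.Icc N ⌊X⌋₊, As N k (X / n) := by
  have := sum_Kfin_succ (N := N) (k := k) hN (X := X) (fun _ => (1:ℝ))
  simpa [Finset.sum_const, As, nsmul_eq_mul] using this

lemma Kfin_filter {N k : ℕ} (hN : 1 ≤ N) {X : ℝ} {n : ℕ} (hn : N ≤ n) :
    Kfin N k (X / n) = (Kfin N k (X / N)).filter fun w => (n : ℝ) * ∏ i, (w i : ℝ) ≤ X := by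
  have hn0 : (0:ℝ) < (n:ℝ) := lt_of_lt_of_le one_pos (one_le_cast_of hN hn)
  have hN0 : (0:ℝ) < (N:ℝ) := by exact_mod_cast hN
  ext w
  simp only [Finset.mem_filter, mem_Kfin hN]
  constructor
  · rintro ⟨h1, h2⟩
    rw [le_div_iff₀ hn0] at h2
    refine ⟨⟨h1, ?_⟩, by linarith [h2]⟩
    rw [le_div_iff₀ hN0]
    calc (∏ i, (w i:ℝ)) * N ≤ (∏ i, (w i:ℝ)) * n := by
          apply mul_le_mul_of_nonneg_left _ (le_of_lt (prodR_pos hN h1))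
          exact_mod_cast hn
      _ ≤ X := by linarith [h2]
  · rintro ⟨⟨h1, _⟩, h3⟩
    exact ⟨h1, by rw [le_div_iff₀ hn0]; linarith⟩

lemma As_swap {N k : ℕ} (hN : 1 ≤ N) {X : ℝ} :
    ∑ n ∈ Finset.Icc N ⌊X⌋₊, As N k (X / n)
      = ∑ w ∈ Kfin N k (X / N), ((⌊X / ∏ i, (w i : ℝ)⌋₊ : ℝ) + 1 - N) := by
  have step1 : ∀ n ∈ Finset.Icc N ⌊X⌋₊,
      As N k (X / n) = ∑ w ∈ Kfin N k (X / N),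
        (if (n : ℝ) * ∏ i, (w i : ℝ) ≤ X then (1:ℝ) else 0) := by
    intro n hn
    rw [Finset.mem_Icc] at hn
    rw [As, Kfin_filter hN hn.1, Finset.card_filter]
    push_cast
    rfl
  rw [Finset.sum_congr rfl step1, Finset.sum_comm]
  apply Finset.sum_congr rfl
  intro w hw
  rw [mem_Kfin hN] at hw
  obtain ⟨h1, h2⟩ := hw
  have hp : (0:ℝ) < ∏ i, (w i : ℝ) := prodR_pos hN h1
  have hN0 : (0:ℝ) < (N:ℝ) := by exact_mod_cast hN
  have hXp : (0:ℝ) < X := by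
    have : (N:ℝ) * ∏ i, (w i:ℝ) ≤ X := by
      rw [le_div_iff₀ hN0] at h2; linarith [h2]
    nlinarith
  have hfloor : N ≤ ⌊X / ∏ i, (w i : ℝ)⌋₊ := by
    apply Nat.le_floor
    rw [le_div_iff₀ hp, ← le_div_iff₀' hN0]
    exact h2
  have hIcc : (Finset.Icc N ⌊X⌋₊).filter (fun n : ℕ => (n : ℝ) * ∏ i, (w i : ℝ) ≤ X)
      = Finset.Icc N ⌊X / ∏ i, (w i : ℝ)⌋₊ := by
    ext n
    simp only [Finset.mem_filter, Finset.mem_Icc]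
    constructor
    · rintro ⟨⟨hn1, _⟩, h3⟩
      exact ⟨hn1, Nat.le_floor (by rw [le_div_iff₀ hp]; exact h3)⟩
    · rintro ⟨hn1, hn2⟩
      have hxw : (0:ℝ) ≤ X / ∏ i, (w i : ℝ) := le_of_lt (div_pos hXp hp)
      have h4 : (n:ℝ) ≤ X / ∏ i, (w i : ℝ) := (Nat.le_floor_iff hxw).mp hn2
      rw [le_div_iff₀ hp] at h4
      have h1' : (1:ℝ) ≤ ∏ i, (w i : ℝ) := one_le_prodR hN h1
      have hn0 : (0:ℝ) ≤ (n:ℝ) := Nat.cast_nonneg n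
      refine ⟨⟨hn1, Nat.le_floor ?_⟩, h4⟩
      nlinarith
  rw [← Finset.sum_filter, Finset.sum_const, hIcc, Nat.card_Icc, nsmul_eq_mul, mul_one]
  have : N ≤ ⌊X / ∏ i, (w i : ℝ)⌋₊ + 1 := hfloor.trans (Nat.le_succ _)
  push_cast [Nat.cast_sub this]
  ring



lemma key_pow_bounds {v u : ℝ} (h0 : 0 ≤ v) (h : v ≤ u) (k : ℕ) :
    ((k:ℝ)+1) * v^k * (u - v) ≤ u^(k+1) - v^(k+1)
      ∧ u^(k+1) - v^(k+1) ≤ ((k:ℝ)+1) * u^k * (u - v) := by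
  have hu0 : 0 ≤ u := h0.trans h
  have hgeom := geom_sum₂_mul u v (k+1)
  simp only [Nat.add_sub_cancel] at hgeom
  have hlow : ((k:ℝ)+1) * v^k ≤ ∑ i ∈ Finset.range (k+1), u ^ i * v ^ (k - i) := by
    calc ((k:ℝ)+1) * v^k = ∑ _i ∈ Finset.range (k+1), v^k := by
          rw [Finset.sum_const, Finset.card_range, nsmul_eq_mul]; push_cast; ring
      _ ≤ _ := by
          apply Finset.sum_le_sum
          intro i hi
          rw [Finset.mem_range, Nat.lt_succ_iff] at hi
          calc v^k = v^i * v^(k-i) := by rw [← pow_add, Nat.add_sub_cancel' hi]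
            _ ≤ u^i * v^(k-i) :=
                mul_le_mul_of_nonneg_right (pow_le_pow_left₀ h0 h i) (pow_nonneg h0 _)
  have hhigh : ∑ i ∈ Finset.range (k+1), u ^ i * v ^ (k - i) ≤ ((k:ℝ)+1) * u^k := by
    calc ∑ i ∈ Finset.range (k+1), u ^ i * v ^ (k - i)
        ≤ ∑ _i ∈ Finset.range (k+1), u^k := by
          apply Finset.sum_le_sum
          intro i hi
          rw [Finset.mem_range, Nat.lt_succ_iff] at hi
          calc u^i * v^(k-i) ≤ u^i * u^(k-i) :=
                mul_le_mul_of_nonneg_left (pow_le_pow_left₀ h0 h _) (pow_nonneg hu0 _)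
            _ = u^k := by rw [← pow_add, Nat.add_sub_cancel' hi]
      _ = ((k:ℝ)+1) * u^k := by rw [Finset.sum_const, Finset.card_range, nsmul_eq_mul]; push_cast; ring
  have hsub : 0 ≤ u - v := sub_nonneg.mpr h
  exact ⟨hgeom ▸ mul_le_mul_of_nonneg_right hlow hsub,
    hgeom ▸ mul_le_mul_of_nonneg_right hhigh hsub⟩

lemma log_diff_ge {m : ℕ} (hm : 1 ≤ m) : 1/((m:ℝ)+1) ≤ Real.log ((m:ℝ)+1) - Real.log m := by
  have hm0 : (0:ℝ) < m := by exact_mod_cast hm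
  have h := Real.log_le_sub_one_of_pos (x := (m:ℝ)/((m:ℝ)+1)) (by positivity)
  rw [Real.log_div (ne_of_gt hm0) (by positivity)] at h
  have h2 : (m:ℝ)/((m:ℝ)+1) - 1 = -(1/((m:ℝ)+1)) := by field_simp; ring
  linarith [h2 ▸ h]

lemma log_diff_le {m : ℕ} (hm : 1 ≤ m) : Real.log ((m:ℝ)+1) - Real.log m ≤ 1/(m:ℝ) := by
  have hm0 : (0:ℝ) < m := by exact_mod_cast hm
  have h := Real.log_le_sub_one_of_pos (x := ((m:ℝ)+1)/(m:ℝ)) (by positivity)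
  rw [Real.log_div (by positivity) (ne_of_gt hm0)] at h
  have h2 : ((m:ℝ)+1)/(m:ℝ) - 1 = 1/(m:ℝ) := by field_simp; ring
  linarith [h2 ▸ h]

/-- the per-step bound: for `1 ≤ m`, `(m+1:ℝ) ≤ X`,
`(log (X/(m+1)) + d)^k / (m+1) ≤ ((log (X/m)+d)^(k+1) - (log (X/(m+1))+d)^(k+1))/(k+1)`. -/
lemma step_upper {m k : ℕ} {d X : ℝ} (hm : 1 ≤ m) (hd : 0 ≤ d) (hX : ((m:ℝ)+1) ≤ X) :
    (Real.log (X/((m:ℝ)+1)) + d)^k / ((m:ℝ)+1)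
      ≤ ((Real.log (X/m) + d)^(k+1) - (Real.log (X/((m:ℝ)+1)) + d)^(k+1)) / ((k:ℝ)+1) := by
  have hm0 : (0:ℝ) < m := by exact_mod_cast hm
  have hm10 : (0:ℝ) < (m:ℝ)+1 := by positivity
  have hX0 : (0:ℝ) < X := lt_of_lt_of_le hm10 hX
  have hu1 : 0 ≤ Real.log (X/((m:ℝ)+1)) + d := by
    have : (1:ℝ) ≤ X/((m:ℝ)+1) := (one_le_div hm10).mpr hX
    linarith [Real.log_nonneg this]
  have hord : Real.log (X/((m:ℝ)+1)) + d ≤ Real.log (X/m) + d := by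
    have hle : X/((m:ℝ)+1) ≤ X/(m:ℝ) :=
      div_le_div_of_nonneg_left (le_of_lt hX0) hm0 (by linarith)
    have := Real.log_le_log (by positivity) hle
    linarith
  have hdiff : (Real.log (X/m) + d) - (Real.log (X/((m:ℝ)+1)) + d)
      = Real.log ((m:ℝ)+1) - Real.log m := by
    rw [Real.log_div (ne_of_gt hX0) (ne_of_gt hm0),
        Real.log_div (ne_of_gt hX0) (ne_of_gt hm10)]
    ring
  have hkey := (key_pow_bounds hu1 hord k).1
  have hstep : 1/((m:ℝ)+1) ≤ (Real.log (X/m) + d) - (Real.log (X/((m:ℝ)+1)) + d) := by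
    rw [hdiff]; exact log_diff_ge hm
  have hpk : (0:ℝ) ≤ (Real.log (X/((m:ℝ)+1)) + d)^k := pow_nonneg hu1 k
  rw [div_le_div_iff₀ hm10 (by positivity)]
  calc (Real.log (X/((m:ℝ)+1)) + d)^k * ((k:ℝ)+1)
      = ((k:ℝ)+1) * (Real.log (X/((m:ℝ)+1)) + d)^k * 1 := by ring
    _ ≤ ((k:ℝ)+1) * (Real.log (X/((m:ℝ)+1)) + d)^k
          * (((Real.log (X/m) + d) - (Real.log (X/((m:ℝ)+1)) + d)) * ((m:ℝ)+1)) := by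
        apply mul_le_mul_of_nonneg_left _ (by positivity)
        calc (1:ℝ) = (1/((m:ℝ)+1)) * ((m:ℝ)+1) := by field_simp
          _ ≤ _ := mul_le_mul_of_nonneg_right hstep (le_of_lt hm10)
    _ = (((k:ℝ)+1) * (Real.log (X/((m:ℝ)+1)) + d)^k
          * ((Real.log (X/m) + d) - (Real.log (X/((m:ℝ)+1)) + d))) * ((m:ℝ)+1) := by ring
    _ ≤ ((Real.log (X/m) + d)^(k+1) - (Real.log (X/((m:ℝ)+1)) + d)^(k+1)) * ((m:ℝ)+1) :=
        mul_le_mul_of_nonneg_right hkey (le_of_lt hm10)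

lemma step_lower {m k : ℕ} {d X : ℝ} (hm : 1 ≤ m) (hd : 0 ≤ d) (hX : ((m:ℝ)+1) ≤ X) :
    ((Real.log (X/m) + d)^(k+1) - (Real.log (X/((m:ℝ)+1)) + d)^(k+1)) / ((k:ℝ)+1)
      ≤ (Real.log (X/m) + d)^k / m := by
  have hm0 : (0:ℝ) < m := by exact_mod_cast hm
  have hm10 : (0:ℝ) < (m:ℝ)+1 := by positivity
  have hX0 : (0:ℝ) < X := lt_of_lt_of_le hm10 hX
  have hu1 : 0 ≤ Real.log (X/((m:ℝ)+1)) + d := by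
    have : (1:ℝ) ≤ X/((m:ℝ)+1) := (one_le_div hm10).mpr hX
    linarith [Real.log_nonneg this]
  have hord : Real.log (X/((m:ℝ)+1)) + d ≤ Real.log (X/m) + d := by
    have hle : X/((m:ℝ)+1) ≤ X/(m:ℝ) :=
      div_le_div_of_nonneg_left (le_of_lt hX0) hm0 (by linarith)
    have := Real.log_le_log (by positivity) hle
    linarith
  have hdiff : (Real.log (X/m) + d) - (Real.log (X/((m:ℝ)+1)) + d)
      = Real.log ((m:ℝ)+1) - Real.log m := by
    rw [Real.log_div (ne_of_gt hX0) (ne_of_gt hm0),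
        Real.log_div (ne_of_gt hX0) (ne_of_gt hm10)]
    ring
  have hkey := (key_pow_bounds hu1 hord k).2
  have hstep : (Real.log (X/m) + d) - (Real.log (X/((m:ℝ)+1)) + d) ≤ 1/(m:ℝ) := by
    rw [hdiff]; exact log_diff_le hm
  have hpk : (0:ℝ) ≤ (Real.log (X/m) + d)^k := pow_nonneg (hu1.trans hord) k
  rw [div_le_div_iff₀ (by positivity) hm0]
  calc ((Real.log (X/m) + d)^(k+1) - (Real.log (X/((m:ℝ)+1)) + d)^(k+1)) * (m:ℝ)
      ≤ (((k:ℝ)+1) * (Real.log (X/m) + d)^k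
          * ((Real.log (X/m) + d) - (Real.log (X/((m:ℝ)+1)) + d))) * (m:ℝ) :=
        mul_le_mul_of_nonneg_right hkey (le_of_lt hm0)
    _ = ((k:ℝ)+1) * (Real.log (X/m) + d)^k
          * (((Real.log (X/m) + d) - (Real.log (X/((m:ℝ)+1)) + d)) * (m:ℝ)) := by ring
    _ ≤ ((k:ℝ)+1) * (Real.log (X/m) + d)^k * 1 := by
        apply mul_le_mul_of_nonneg_left _ (by positivity)
        calc ((Real.log (X/m) + d) - (Real.log (X/((m:ℝ)+1)) + d)) * (m:ℝ)
            ≤ (1/(m:ℝ)) * (m:ℝ) := mul_le_mul_of_nonneg_right hstep (le_of_lt hm0)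
          _ = 1 := by field_simp
    _ = (Real.log (X/m) + d)^k * ((k:ℝ)+1) := by ring



lemma tel_upper (k N : ℕ) (d X : ℝ) (hN : 1 ≤ N) (hd : 0 ≤ d) :
    ∀ M, N ≤ M → (M:ℝ) ≤ X →
      ∑ n ∈ Finset.Icc (N+1) M, (Real.log (X/n) + d)^k / n
        ≤ ((Real.log (X/N) + d)^(k+1) - (Real.log (X/M) + d)^(k+1)) / ((k:ℝ)+1) := by
  intro M hM
  induction M, hM using Nat.le_induction with
  | base => intro _; simp
  | succ M hM ih =>
    intro hMX
    have hMX' : (M:ℝ) ≤ X := by push_cast at hMX; linarith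
    have ih' := ih hMX'
    have hst := step_upper (m := M) (k := k) (d := d) (X := X) (hN.trans hM) hd
      (by push_cast at hMX ⊢; linarith)
    rw [Finset.sum_Icc_succ_top (Nat.succ_le_succ hM)]
    push_cast
    calc ∑ n ∈ Finset.Icc (N+1) M, (Real.log (X/n) + d)^k / n
          + (Real.log (X/((M:ℝ)+1)) + d)^k / ((M:ℝ)+1)
        ≤ ((Real.log (X/N) + d)^(k+1) - (Real.log (X/M) + d)^(k+1)) / ((k:ℝ)+1)
          + ((Real.log (X/M) + d)^(k+1) - (Real.log (X/((M:ℝ)+1)) + d)^(k+1)) / ((k:ℝ)+1) :=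
          add_le_add ih' hst
      _ = ((Real.log (X/N) + d)^(k+1) - (Real.log (X/((M:ℝ)+1)) + d)^(k+1)) / ((k:ℝ)+1) := by
          ring

lemma tel_lower (k N : ℕ) (X : ℝ) (hN : 1 ≤ N) :
    ∀ M, N ≤ M → ((M:ℝ)+1) ≤ X →
      ((Real.log (X/N))^(k+1) - (Real.log (X/((M:ℝ)+1)))^(k+1)) / ((k:ℝ)+1)
        ≤ ∑ n ∈ Finset.Icc N M, (Real.log (X/n))^k / n := by
  intro M hM
  induction M, hM using Nat.le_induction with
  | base =>
    intro hX
    rw [Finset.Icc_self, Finset.sum_singleton]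
    simpa using step_lower (m := N) (k := k) (d := 0) (X := X) hN le_rfl hX
  | succ M hM ih =>
    intro hMX
    have hMX' : ((M:ℝ)+1) ≤ X := by push_cast at hMX; linarith
    have ih' := ih hMX'
    have hst := step_lower (m := M+1) (k := k) (d := 0) (X := X) (hN.trans (hM.trans (Nat.le_succ M)))
      le_rfl (by push_cast at hMX ⊢; linarith)
    rw [Finset.sum_Icc_succ_top (hM.trans (Nat.le_succ M))]
    push_cast at hst ⊢
    simp only [add_zero] at hst
    calc ((Real.log (X/N))^(k+1) - (Real.log (X/((M:ℝ)+1+1)))^(k+1)) / ((k:ℝ)+1)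
        = ((Real.log (X/N))^(k+1) - (Real.log (X/((M:ℝ)+1)))^(k+1)) / ((k:ℝ)+1)
          + ((Real.log (X/((M:ℝ)+1)))^(k+1) - (Real.log (X/((M:ℝ)+1+1)))^(k+1)) / ((k:ℝ)+1) := by
          ring
      _ ≤ ∑ n ∈ Finset.Icc N M, (Real.log (X/n))^k / n
            + (Real.log (X/((M:ℝ)+1)))^k / ((M:ℝ)+1) := add_le_add ih' hst

lemma sum_upper_full {k N M : ℕ} {d X : ℝ} (hN : 1 ≤ N) (hd : 0 ≤ d) (hX : 1 ≤ X)
    (hM : (M:ℝ) ≤ X) :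
    ∑ n ∈ Finset.Icc N M, (Real.log (X/n) + d)^k / n
      ≤ (Real.log X + d)^k + (Real.log X + d)^(k+1) / ((k:ℝ)+1) := by
  have hlogX : 0 ≤ Real.log X := Real.log_nonneg hX
  rcases lt_or_ge M N with h | h
  · rw [Finset.Icc_eq_empty (by omega), Finset.sum_empty]
    positivity
  · have hN0 : (0:ℝ) < N := by exact_mod_cast hN
    have hN1 : (1:ℝ) ≤ (N:ℝ) := by exact_mod_cast hN
    have hX0 : (0:ℝ) < X := lt_of_lt_of_le one_pos hX
    have hXN1 : (1:ℝ) ≤ X / N := by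
      rw [le_div_iff₀ hN0, one_mul]
      calc (N:ℝ) ≤ (M:ℝ) := by exact_mod_cast h
        _ ≤ X := hM
    have huN0 : 0 ≤ Real.log (X/N) + d := by linarith [Real.log_nonneg hXN1]
    have huNle : Real.log (X/N) + d ≤ Real.log X + d := by
      have : X / N ≤ X := by
        rw [div_le_iff₀ hN0]
        nlinarith [hX0, hN1]
      linarith [Real.log_le_log (by positivity) this]
    have hM0 : (0:ℝ) < M := lt_of_lt_of_le hN0 (by exact_mod_cast h)
    have huM0 : 0 ≤ Real.log (X/M) + d := by
      have : (1:ℝ) ≤ X / M := (one_le_div hM0).mpr hM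
      linarith [Real.log_nonneg this]
    rw [Finset.Icc_eq_cons_Ioc h, Finset.sum_cons, ← Finset.Icc_add_one_left_eq_Ioc]
    have h1 : (Real.log (X/N) + d)^k / N ≤ (Real.log X + d)^k := by
      have ha : (Real.log (X/N) + d)^k / N ≤ (Real.log (X/N) + d)^k := by
        rw [div_le_iff₀ hN0]
        nlinarith [pow_nonneg huN0 k, hN1]
      exact ha.trans (pow_le_pow_left₀ huN0 huNle k)
    have h2 : ∑ n ∈ Finset.Icc (N+1) M, (Real.log (X/n) + d)^k / n
        ≤ (Real.log X + d)^(k+1) / ((k:ℝ)+1) := by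
      refine (tel_upper k N d X hN hd M h hM).trans ?_
      apply (div_le_div_iff_of_pos_right (by positivity : (0:ℝ) < (k:ℝ)+1)).mpr
      nlinarith [pow_nonneg huM0 (k+1), pow_le_pow_left₀ huN0 huNle (k+1)]
    exact add_le_add h1 h2



lemma Kfin_zero_card_le (N : ℕ) (X : ℝ) : (Kfin N 0 X).card ≤ 1 :=
  Finset.card_le_one.mpr (fun a _ b _ => Subsingleton.elim a b)

lemma As_zero_le (N : ℕ) (X : ℝ) : As N 0 X ≤ 1 := by
  rw [As]
  exact_mod_cast Kfin_zero_card_le N X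

lemma Bs_zero {N : ℕ} (hN : 1 ≤ N) {X : ℝ} (hX : 1 ≤ X) : Bs N 0 X = 1 := by
  have hmem : (fun i : Fin 0 => i.elim0) ∈ Kfin N 0 X := by
    rw [mem_Kfin hN]
    refine ⟨fun i => i.elim0, ?_⟩
    simp only [Finset.univ_eq_empty, Finset.prod_empty]
    exact hX
  have hcard : (Kfin N 0 X).card = 1 :=
    le_antisymm (Kfin_zero_card_le N X) (Finset.card_pos.mpr ⟨_, hmem⟩)
  rw [Bs]
  have : ∀ v ∈ Kfin N 0 X, (∏ i : Fin 0, ((v i : ℝ)))⁻¹ = 1 := by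
    intro v _; simp
  rw [Finset.sum_congr rfl this, Finset.sum_const, hcard, one_smul]

lemma Bs_zero_le {N : ℕ} (X : ℝ) : Bs N 0 X ≤ 1 := by
  rw [Bs]
  have : ∀ v ∈ Kfin N 0 X, (∏ i : Fin 0, ((v i : ℝ)))⁻¹ = 1 := by
    intro v _; simp
  rw [Finset.sum_congr rfl this, Finset.sum_const, nsmul_eq_mul, mul_one]
  exact_mod_cast Kfin_zero_card_le N X

lemma key_succ (t : ℝ) (ht : 0 ≤ t) (k : ℕ) :
    ((k:ℝ)+1) * t^k + t^(k+1) ≤ (t+1)^(k+1) := by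
  have h := (key_pow_bounds (v := t) (u := t+1) ht (by linarith) k).1
  have h1 : (t+1) - t = 1 := by ring
  rw [h1, mul_one] at h
  linarith

lemma Bs_le {N : ℕ} (hN : 1 ≤ N) :
    ∀ (k : ℕ) {X : ℝ}, 1 ≤ X → Bs N k X ≤ (Real.log X + k)^k / (Nat.factorial k : ℝ) := by
  intro k
  induction k with
  | zero =>
    intro X hX
    simpa using Bs_zero_le X
  | succ k ih =>
    intro X hX
    have hX0 : (0:ℝ) < X := lt_of_lt_of_le one_pos hX
    have hlogX : 0 ≤ Real.log X := Real.log_nonneg hX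
    have hk0 : (0:ℝ) < (Nat.factorial k : ℝ) := by exact_mod_cast Nat.factorial_pos k
    rw [Bs_succ hN]
    have hterm : ∀ n ∈ Finset.Icc N ⌊X⌋₊,
        (n:ℝ)⁻¹ * Bs N k (X / n)
          ≤ (1/(Nat.factorial k : ℝ)) * ((Real.log (X/n) + k)^k / n) := by
      intro n hn
      rw [Finset.mem_Icc] at hn
      have hn0 : (0:ℝ) < (n:ℝ) := lt_of_lt_of_le one_pos (one_le_cast_of hN hn.1)
      have hnX : (n:ℝ) ≤ X := le_trans (by exact_mod_cast hn.2) (Nat.floor_le (le_of_lt hX0))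
      have h1 : (1:ℝ) ≤ X / n := (one_le_div hn0).mpr hnX
      have := ih h1
      calc (n:ℝ)⁻¹ * Bs N k (X / n)
          ≤ (n:ℝ)⁻¹ * ((Real.log (X/n) + k)^k / (Nat.factorial k : ℝ)) := by
            apply mul_le_mul_of_nonneg_left this (by positivity)
        _ = (1/(Nat.factorial k : ℝ)) * ((Real.log (X/n) + k)^k / n) := by
            ring
    calc ∑ n ∈ Finset.Icc N ⌊X⌋₊, (n:ℝ)⁻¹ * Bs N k (X / n)
        ≤ ∑ n ∈ Finset.Icc N ⌊X⌋₊,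
            (1/(Nat.factorial k : ℝ)) * ((Real.log (X/n) + k)^k / n) :=
          Finset.sum_le_sum hterm
      _ = (1/(Nat.factorial k : ℝ)) * ∑ n ∈ Finset.Icc N ⌊X⌋₊, (Real.log (X/n) + k)^k / n := by
          rw [Finset.mul_sum]
      _ ≤ (1/(Nat.factorial k : ℝ))
            * ((Real.log X + k)^k + (Real.log X + k)^(k+1) / ((k:ℝ)+1)) := by
          apply mul_le_mul_of_nonneg_left _ (by positivity)
          exact sum_upper_full hN (by positivity) hX (Nat.floor_le (le_of_lt hX0))
      _ ≤ (Real.log X + (k+1:ℕ))^(k+1) / (Nat.factorial (k+1) : ℝ) := by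
          have hkey := key_succ (Real.log X + k) (by positivity) k
          have hK : (0:ℝ) < (k:ℝ)+1 := by positivity
          have h2 : (Real.log X + k)^k + (Real.log X + k)^(k+1) / ((k:ℝ)+1)
              ≤ (Real.log X + k + 1)^(k+1) / ((k:ℝ)+1) := by
            rw [le_div_iff₀ hK]
            have hexp : ((Real.log X + k)^k + (Real.log X + k)^(k+1) / ((k:ℝ)+1)) * ((k:ℝ)+1)
                = ((k:ℝ)+1) * (Real.log X + k)^k + (Real.log X + k)^(k+1) := by
              field_simp
            rw [hexp]
            linarith [hkey]
          have hfact : (Nat.factorial (k+1) : ℝ) = ((k:ℝ)+1) * (Nat.factorial k : ℝ) := by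
            rw [Nat.factorial_succ]; push_cast; ring
          calc 1/(Nat.factorial k : ℝ)
                * ((Real.log X + k)^k + (Real.log X + k)^(k+1) / ((k:ℝ)+1))
              ≤ 1/(Nat.factorial k : ℝ) * ((Real.log X + k + 1)^(k+1) / ((k:ℝ)+1)) :=
                mul_le_mul_of_nonneg_left h2 (by positivity)
            _ = (Real.log X + (k+1:ℕ))^(k+1) / (Nat.factorial (k+1) : ℝ) := by
                rw [hfact]
                have hkne : (Nat.factorial k : ℝ) ≠ 0 := by positivity
                have hKne : ((k:ℝ)+1) ≠ 0 := by positivity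
                push_cast
                field_simp
                ring



lemma tendsto_ratio (c : ℝ) (j : ℕ) :
    Tendsto (fun X : ℝ => (Real.log X + c)^j / (Real.log X)^j) atTop (nhds 1) := by
  have h0 : Tendsto (fun X : ℝ => c / Real.log X) atTop (nhds 0) := by
    have := (tendsto_inv_atTop_zero.comp Real.tendsto_log_atTop).const_mul c
    simpa [div_eq_mul_inv, Function.comp] using this
  have h1 : Tendsto (fun X : ℝ => 1 + c / Real.log X) atTop (nhds 1) := by
    simpa using tendsto_const_nhds.add h0
  have h2 : Tendsto (fun X : ℝ => (1 + c / Real.log X)^j) atTop (nhds 1) := by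
    simpa using h1.pow j
  apply h2.congr'
  filter_upwards [Real.tendsto_log_atTop.eventually_gt_atTop 0] with X hX
  have hne : Real.log X ≠ 0 := ne_of_gt hX
  have : 1 + c / Real.log X = (Real.log X + c) / Real.log X := by field_simp
  rw [this, div_pow]

lemma tendsto_zero_ratio (C : ℝ) (j : ℕ) (hj : j ≠ 0) :
    Tendsto (fun X : ℝ => C / (Real.log X)^j) atTop (nhds 0) := by
  have h : Tendsto (fun X : ℝ => ((Real.log X)^j)⁻¹) atTop (nhds 0) :=
    tendsto_inv_atTop_zero.comp ((tendsto_pow_atTop hj).comp Real.tendsto_log_atTop)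
  have := h.const_mul C
  simpa [div_eq_mul_inv, Function.comp] using this

lemma Bs_lim {N : ℕ} (hN : 1 ≤ N) :
    ∀ k, Tendsto (fun X => Bs N k X / (Real.log X)^k) atTop
      (nhds (1/(Nat.factorial k : ℝ))) := by
  intro k
  induction k with
  | zero =>
    have hev : (fun _ : ℝ => (1:ℝ)) =ᶠ[atTop] fun X => Bs N 0 X / (Real.log X)^0 := by
      filter_upwards [eventually_ge_atTop (1:ℝ)] with X hX
      simp [Bs_zero hN hX]
    simpa using Tendsto.congr' hev tendsto_const_nhds
  | succ k ih =>
    set L : ℝ := 1/(Nat.factorial (k+1) : ℝ) with hLdef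
    set Lk : ℝ := 1/(Nat.factorial k : ℝ) with hLkdef
    have hk0 : (0:ℝ) < (Nat.factorial k : ℝ) := by exact_mod_cast Nat.factorial_pos k
    have hk10 : (0:ℝ) < (Nat.factorial (k+1) : ℝ) := by exact_mod_cast Nat.factorial_pos (k+1)
    have hLkL : Lk / ((k:ℝ)+1) = L := by
      rw [hLkdef, hLdef]
      rw [Nat.factorial_succ]
      push_cast
      field_simp
    rw [tendsto_order]
    constructor
    · -- lower bound direction
      intro a ha
      set ε : ℝ := min ((L - a) * ((k:ℝ)+1) / 2) (1/(2*(Nat.factorial k : ℝ))) with hεdef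
      have hε : 0 < ε := by
        apply lt_min
        · have : 0 < L - a := by linarith
          positivity
        · positivity
      have hβ : 0 < Lk - ε := by
        have h1 : ε ≤ 1/(2*(Nat.factorial k : ℝ)) := min_le_right _ _
        have h2 : 1/(2*(Nat.factorial k : ℝ)) < Lk := by
          rw [hLkdef]
          rw [div_lt_div_iff₀ (by positivity) (by positivity)]
          nlinarith
        linarith
      have hc : a < (Lk - ε) / ((k:ℝ)+1) := by
        have h1 : ε ≤ (L - a) * ((k:ℝ)+1) / 2 := min_le_left _ _
        have h2 : (Lk - ε)/((k:ℝ)+1) = L - ε/((k:ℝ)+1) := by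
          rw [← hLkL]; ring
        rw [h2]
        have h3 : ε/((k:ℝ)+1) ≤ (L - a)/2 := by
          rw [div_le_div_iff₀ (by positivity) (by positivity : (0:ℝ) < 2)]
          nlinarith
        linarith
      -- from ih, get eventual lower bound
      have hev : ∀ᶠ Y : ℝ in atTop, (Lk - ε) * (Real.log Y)^k ≤ Bs N k Y := by
        have hdist := (Metric.tendsto_nhds.mp ih) ε hε
        filter_upwards [hdist, eventually_gt_atTop (1:ℝ)] with Y hY h1Y
        rw [Real.dist_eq, abs_lt] at hY
        have hlY : 0 < Real.log Y := Real.log_pos h1Y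
        have hpk : 0 < (Real.log Y)^k := pow_pos hlY k
        have : Lk - ε < Bs N k Y / (Real.log Y)^k := by linarith [hY.1]
        calc (Lk - ε) * (Real.log Y)^k
            ≤ (Bs N k Y / (Real.log Y)^k) * (Real.log Y)^k :=
              mul_le_mul_of_nonneg_right (le_of_lt this) (le_of_lt hpk)
          _ = Bs N k Y := by field_simp
      obtain ⟨T0, hT0⟩ := eventually_atTop.mp hev
      set T : ℝ := max T0 2 with hTdef
      have hT2 : (2:ℝ) ≤ T := le_max_right _ _
      have hT : ∀ Y : ℝ, T ≤ Y → (Lk - ε) * (Real.log Y)^k ≤ Bs N k Y := by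
        intro Y hY
        exact hT0 Y (le_trans (le_max_left _ _) hY)
      -- the comparison function W
      set c : ℝ := (Lk - ε) / ((k:ℝ)+1) with hcdef
      set W : ℝ → ℝ := fun X =>
        c * ((Real.log X + (-Real.log (N:ℝ)))^(k+1) / (Real.log X)^(k+1))
          - c * ((Real.log T)^(k+1) / (Real.log X)^(k+1)) with hWdef
      have hW : Tendsto W atTop (nhds c) := by
        have h1 := (tendsto_ratio (-Real.log (N:ℝ)) (k+1)).const_mul c
        have h2 := (tendsto_zero_ratio ((Real.log T)^(k+1)) (k+1) (Nat.succ_ne_zero k)).const_mul c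
        have := h1.sub h2
        simpa using this
      have hWa : ∀ᶠ X : ℝ in atTop, a < W X := hW.eventually_const_lt hc
      have hNR : (0:ℝ) < (N:ℝ) := by exact_mod_cast hN
      -- main eventual estimate
      have hmain : ∀ᶠ X : ℝ in atTop, W X ≤ Bs N (k+1) X / (Real.log X)^(k+1) := by
        filter_upwards [eventually_ge_atTop ((N:ℝ)*T), eventually_ge_atTop (2*T),
          eventually_gt_atTop (1:ℝ)] with X hXNT hX2T h1X
        have hX0 : (0:ℝ) < X := lt_trans one_pos h1X
        have hT0' : (0:ℝ) < T := lt_of_lt_of_le two_pos hT2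
        have hlX : 0 < Real.log X := Real.log_pos h1X
        set M : ℕ := ⌊X/T⌋₊ with hMdef
        have hXT1 : (1:ℝ) ≤ X/T := by
          rw [le_div_iff₀ hT0']
          calc (1:ℝ)*T = T := one_mul T
            _ ≤ 2*T := by linarith
            _ ≤ X := hX2T
        have hNM : N ≤ M := by
          apply Nat.le_floor
          rw [le_div_iff₀ hT0']
          exact hXNT
        have hM1X : ((M:ℝ)+1) ≤ X := by
          have h1 : (M:ℝ) ≤ X/T := Nat.floor_le (by positivity)
          have h2 : X/T ≤ X/2 := by
            apply div_le_div_of_nonneg_left (le_of_lt hX0) two_pos hT2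
          have h3 : X/2 + 1 ≤ X := by
            rw [div_add' _ _ _ (two_ne_zero)]
            rw [div_le_iff₀ two_pos]
            linarith
          linarith
        have hMfloor : M ≤ ⌊X⌋₊ := Nat.floor_mono (by
          calc X/T ≤ X/1 := div_le_div_of_nonneg_left (le_of_lt hX0) one_pos (by linarith)
            _ = X := div_one X)
        -- step 1: restrict the sum
        have hstep1 : ∑ n ∈ Finset.Icc N M, (n:ℝ)⁻¹ * Bs N k (X/n) ≤ Bs N (k+1) X := by
          rw [Bs_succ hN]
          apply Finset.sum_le_sum_of_subset_of_nonneg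
          · exact Finset.Icc_subset_Icc_right hMfloor
          · intro n _ _
            exact mul_nonneg (by positivity) (Bs_nonneg N k _)
        -- step 2: lower bound each term
        have hstep2 : ∀ n ∈ Finset.Icc N M,
            (Lk - ε) * ((Real.log (X/n))^k / n) ≤ (n:ℝ)⁻¹ * Bs N k (X/n) := by
          intro n hn
          rw [Finset.mem_Icc] at hn
          have hn0 : (0:ℝ) < (n:ℝ) := lt_of_lt_of_le one_pos (one_le_cast_of hN hn.1)
          have hnM : (n:ℝ) ≤ X/T := le_trans (by exact_mod_cast hn.2) (Nat.floor_le (by positivity))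
          have hTXn : T ≤ X/n := by
            rw [le_div_iff₀ hn0]
            rw [le_div_iff₀ hT0'] at hnM
            linarith [hnM]
          have := hT (X/n) hTXn
          calc (Lk - ε) * ((Real.log (X/n))^k / n)
              = (n:ℝ)⁻¹ * ((Lk - ε) * (Real.log (X/n))^k) := by ring
            _ ≤ (n:ℝ)⁻¹ * Bs N k (X/n) :=
                mul_le_mul_of_nonneg_left this (by positivity)
        -- step 3: telescoping lower bound
        have hstep3 := tel_lower k N X hN M hNM hM1X
        -- step 4: bound log(X/(M+1)) by log T
        have hXM1 : X/((M:ℝ)+1) ≤ T := by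
          have h1 : X/T < (M:ℝ)+1 := Nat.lt_floor_add_one (X/T)
          rw [div_lt_iff₀ hT0'] at h1
          rw [div_le_iff₀ (by positivity : (0:ℝ) < (M:ℝ)+1)]
          linarith [h1]
        have hXM1' : (1:ℝ) ≤ X/((M:ℝ)+1) := (one_le_div (by positivity)).mpr hM1X
        have hpow4 : (Real.log (X/((M:ℝ)+1)))^(k+1) ≤ (Real.log T)^(k+1) :=
          pow_le_pow_left₀ (Real.log_nonneg hXM1')
            (Real.log_le_log (by positivity) hXM1) (k+1)
        have hlogXN : Real.log (X/(N:ℝ)) = Real.log X + (-Real.log (N:ℝ)) := by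
          rw [Real.log_div (ne_of_gt hX0) (ne_of_gt hNR)]; ring
        -- combine
        have hcomb : (Lk - ε) * (((Real.log X + (-Real.log (N:ℝ)))^(k+1)
              - (Real.log T)^(k+1)) / ((k:ℝ)+1)) ≤ Bs N (k+1) X := by
          calc (Lk - ε) * (((Real.log X + (-Real.log (N:ℝ)))^(k+1)
                - (Real.log T)^(k+1)) / ((k:ℝ)+1))
              ≤ (Lk - ε) * (((Real.log (X/(N:ℝ)))^(k+1)
                - (Real.log (X/((M:ℝ)+1)))^(k+1)) / ((k:ℝ)+1)) := by
                apply mul_le_mul_of_nonneg_left _ (le_of_lt hβ)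
                rw [hlogXN]
                apply (div_le_div_iff_of_pos_right (by positivity : (0:ℝ) < (k:ℝ)+1)).mpr
                linarith [hpow4]
            _ ≤ (Lk - ε) * ∑ n ∈ Finset.Icc N M, (Real.log (X/n))^k / n :=
                mul_le_mul_of_nonneg_left hstep3 (le_of_lt hβ)
            _ = ∑ n ∈ Finset.Icc N M, (Lk - ε) * ((Real.log (X/n))^k / n) := by
                rw [Finset.mul_sum]
            _ ≤ ∑ n ∈ Finset.Icc N M, (n:ℝ)⁻¹ * Bs N k (X/n) :=
                Finset.sum_le_sum hstep2
            _ ≤ Bs N (k+1) X := hstep1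
        -- divide by (log X)^(k+1)
        have hpos : (0:ℝ) < (Real.log X)^(k+1) := pow_pos hlX (k+1)
        have hdiv := (div_le_div_iff_of_pos_right hpos).mpr hcomb
        calc W X = (Lk - ε) * (((Real.log X + (-Real.log (N:ℝ)))^(k+1)
              - (Real.log T)^(k+1)) / ((k:ℝ)+1)) / (Real.log X)^(k+1) := by
              rw [hWdef, hcdef]; ring
          _ ≤ Bs N (k+1) X / (Real.log X)^(k+1) := hdiv
      filter_upwards [hWa, hmain] with X h1 h2
      exact lt_of_lt_of_le h1 h2
    · -- upper bound direction
      intro a ha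
      have hub : Tendsto (fun X : ℝ => (1/(Nat.factorial (k+1) : ℝ))
          * ((Real.log X + ((k:ℝ)+1))^(k+1) / (Real.log X)^(k+1))) atTop (nhds L) := by
        have := (tendsto_ratio ((k:ℝ)+1) (k+1)).const_mul (1/(Nat.factorial (k+1) : ℝ))
        simpa [hLdef, one_div] using this
      have hub' : ∀ᶠ X : ℝ in atTop, (1/(Nat.factorial (k+1) : ℝ))
          * ((Real.log X + ((k:ℝ)+1))^(k+1) / (Real.log X)^(k+1)) < a :=
        hub.eventually_lt_const ha
      filter_upwards [hub', eventually_gt_atTop (1:ℝ)] with X h1 h2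
      have hlX : 0 < Real.log X := Real.log_pos h2
      have hpos : (0:ℝ) < (Real.log X)^(k+1) := pow_pos hlX (k+1)
      have hle := Bs_le hN (k+1) (le_of_lt h2)
      have := (div_le_div_iff_of_pos_right hpos).mpr hle
      calc Bs N (k+1) X / (Real.log X)^(k+1)
          ≤ ((Real.log X + ((k+1:ℕ):ℝ))^(k+1) / (Nat.factorial (k+1) : ℝ))
            / (Real.log X)^(k+1) := this
        _ = (1/(Nat.factorial (k+1) : ℝ))
            * ((Real.log X + ((k:ℝ)+1))^(k+1) / (Real.log X)^(k+1)) := by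
            push_cast
            ring
        _ < a := h1



lemma As_upper {N k : ℕ} (hN : 1 ≤ N) (X : ℝ) :
    As N (k+1) X ≤ X * Bs N k (X/N) := by
  rw [As_succ hN, As_swap hN, Bs, Finset.mul_sum]
  apply Finset.sum_le_sum
  intro w hw
  rw [mem_Kfin hN] at hw
  obtain ⟨h1, h2⟩ := hw
  have hp : (0:ℝ) < ∏ i, (w i : ℝ) := prodR_pos hN h1
  have hp1 : (1:ℝ) ≤ ∏ i, (w i : ℝ) := one_le_prodR hN h1
  have hN0 : (0:ℝ) < (N:ℝ) := by exact_mod_cast hN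
  have hN1 : (1:ℝ) ≤ (N:ℝ) := by exact_mod_cast hN
  have hX0 : (0:ℝ) < X := by
    rw [le_div_iff₀ hN0] at h2
    nlinarith
  have hfl : (⌊X / ∏ i, (w i : ℝ)⌋₊ : ℝ) ≤ X / ∏ i, (w i : ℝ) :=
    Nat.floor_le (by positivity)
  calc (⌊X / ∏ i, (w i : ℝ)⌋₊ : ℝ) + 1 - N ≤ X / ∏ i, (w i : ℝ) := by linarith
    _ = X * (∏ i, (w i : ℝ))⁻¹ := div_eq_mul_inv _ _

lemma As_lower {N k : ℕ} (hN : 1 ≤ N) (X : ℝ) :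
    X * Bs N k (X/N) - (N:ℝ) * As N k (X/N) ≤ As N (k+1) X := by
  rw [As_succ hN, As_swap hN, Bs, As, Finset.mul_sum, Finset.card_eq_sum_ones,
    Nat.cast_sum, Finset.mul_sum, ← Finset.sum_sub_distrib]
  apply Finset.sum_le_sum
  intro w hw
  rw [mem_Kfin hN] at hw
  obtain ⟨h1, h2⟩ := hw
  have hp : (0:ℝ) < ∏ i, (w i : ℝ) := prodR_pos hN h1
  have hfl : X / ∏ i, (w i : ℝ) < (⌊X / ∏ i, (w i : ℝ)⌋₊ : ℝ) + 1 :=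
    Nat.lt_floor_add_one _
  have heq : X * (∏ i, (w i : ℝ))⁻¹ = X / ∏ i, (w i : ℝ) := (div_eq_mul_inv _ _).symm
  rw [heq, Nat.cast_one, mul_one]
  linarith

lemma err_lim {N : ℕ} (hN : 1 ≤ N) (k : ℕ) :
    Tendsto (fun R : ℝ => (N:ℝ) * As N k (R/N) / (R * (Real.log R)^k)) atTop (nhds 0) := by
  have hN0 : (0:ℝ) < (N:ℝ) := by exact_mod_cast hN
  have hN1 : (1:ℝ) ≤ (N:ℝ) := by exact_mod_cast hN
  have hnonneg : ∀ᶠ R : ℝ in atTop,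
      0 ≤ (N:ℝ) * As N k (R/N) / (R * (Real.log R)^k) := by
    filter_upwards [eventually_gt_atTop (1:ℝ)] with R hR
    have hl : 0 < Real.log R := Real.log_pos hR
    have hr : (0:ℝ) < R := lt_trans one_pos hR
    apply div_nonneg
    · exact mul_nonneg (Nat.cast_nonneg N) (As_nonneg _ _ _)
    · positivity
  cases k with
  | zero =>
    have hup : Tendsto (fun R : ℝ => (N:ℝ) / R) atTop (nhds 0) := by
      have := tendsto_inv_atTop_zero.const_mul (N:ℝ)
      simpa [div_eq_mul_inv] using this
    apply tendsto_of_tendsto_of_tendsto_of_le_of_le' tendsto_const_nhds hup hnonneg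
    filter_upwards [eventually_gt_atTop (1:ℝ)] with R hR
    have hR0 : (0:ℝ) < R := lt_trans one_pos hR
    have hAs := As_zero_le N (R/N)
    have hAs0 : 0 ≤ As N 0 (R/N) := As_nonneg N 0 (R/N)
    calc (N:ℝ) * As N 0 (R/N) / (R * (Real.log R)^0)
        = (N:ℝ) * As N 0 (R/N) / R := by simp
      _ ≤ (N:ℝ) * 1 / R := by
          apply (div_le_div_iff_of_pos_right hR0).mpr
          exact mul_le_mul_of_nonneg_left hAs (le_of_lt hN0)
      _ = (N:ℝ) / R := by ring
  | succ j =>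
    have hjf : (0:ℝ) < (Nat.factorial j : ℝ) := by exact_mod_cast Nat.factorial_pos j
    have hup : Tendsto (fun R : ℝ => (1/(Nat.factorial j : ℝ))
        * ((Real.log R + j)^j / (Real.log R)^j) * (Real.log R)⁻¹) atTop (nhds 0) := by
      have h1 := (tendsto_ratio (j:ℝ) j).const_mul (1/(Nat.factorial j : ℝ))
      have h2 : Tendsto (fun R : ℝ => (Real.log R)⁻¹) atTop (nhds 0) :=
        tendsto_inv_atTop_zero.comp Real.tendsto_log_atTop
      have := h1.mul h2
      simpa using this
    apply tendsto_of_tendsto_of_tendsto_of_le_of_le' tendsto_const_nhds hup hnonneg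
    filter_upwards [eventually_gt_atTop (1:ℝ), eventually_ge_atTop ((N:ℝ)*(N:ℝ))]
      with R hR hRN
    have hR0 : (0:ℝ) < R := lt_trans one_pos hR
    have hlR : 0 < Real.log R := Real.log_pos hR
    have hRN1 : (1:ℝ) ≤ R / N := by
      rw [le_div_iff₀ hN0]
      nlinarith
    -- As N (j+1) (R/N) ≤ (R/N) * Bs N j (R/(N*N)) ≤ (R/N) * Bs N j R
    have hAs : As N (j+1) (R/N) ≤ (R/N) * Bs N j R := by
      calc As N (j+1) (R/N) ≤ (R/N) * Bs N j ((R/N)/N) := As_upper hN (R/N)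
        _ ≤ (R/N) * Bs N j R := by
            apply mul_le_mul_of_nonneg_left _ (by positivity)
            apply Bs_mono hN
            rw [div_div]
            apply div_le_self (le_of_lt hR0)
            nlinarith
    have hBs := Bs_le hN j (le_of_lt hR)
    have hkey : (N:ℝ) * As N (j+1) (R/N) / (R * (Real.log R)^(j+1))
        ≤ (1/(Nat.factorial j : ℝ)) * ((Real.log R + j)^j / (Real.log R)^j)
          * (Real.log R)⁻¹ := by
      have hAs2 : (N:ℝ) * As N (j+1) (R/N) ≤ R * Bs N j R := by
        calc (N:ℝ) * As N (j+1) (R/N) ≤ (N:ℝ) * ((R/N) * Bs N j R) :=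
              mul_le_mul_of_nonneg_left hAs (le_of_lt hN0)
          _ = R * Bs N j R := by field_simp
      have hd : (0:ℝ) < R * (Real.log R)^(j+1) := by positivity
      calc (N:ℝ) * As N (j+1) (R/N) / (R * (Real.log R)^(j+1))
          ≤ R * Bs N j R / (R * (Real.log R)^(j+1)) := (div_le_div_iff_of_pos_right hd).mpr hAs2
        _ = Bs N j R / (Real.log R)^(j+1) := by
            rw [mul_div_mul_left _ _ (ne_of_gt hR0)]
        _ ≤ ((Real.log R + j)^j / (Nat.factorial j : ℝ)) / (Real.log R)^(j+1) := by
            apply (div_le_div_iff_of_pos_right (by positivity)).mpr hBs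
        _ = (1/(Nat.factorial j : ℝ)) * ((Real.log R + j)^j / (Real.log R)^j)
              * (Real.log R)⁻¹ := by
            rw [pow_succ]
            field_simp
    exact hkey



end Stmt3

open Stmt3 Filter Real

theorem stmt_3 (N l : ℕ) (hN : 1 ≤ N) (hl : 1 ≤ l) :
    Filter.Tendsto
      (fun R : ℝ =>
        (({n : Fin l → ℕ | (∀ i, N ≤ n i) ∧ (∏ i, (n i : ℝ)) ≤ R}.ncard) : ℝ)
          / (R * (Real.log R) ^ (l - 1)))
      Filter.atTop (nhds (1 / (Nat.factorial (l - 1) : ℝ))) := by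
  obtain ⟨k, rfl⟩ : ∃ k, l = k + 1 := ⟨l - 1, by omega⟩
  have hsub : k + 1 - 1 = k := by omega
  rw [hsub]
  have hN0 : (0:ℝ) < (N:ℝ) := by exact_mod_cast hN
  have hkf : (0:ℝ) < (Nat.factorial k : ℝ) := by exact_mod_cast Nat.factorial_pos k
  have hfun : ∀ R : ℝ,
      (({n : Fin (k+1) → ℕ | (∀ i, N ≤ n i) ∧ (∏ i, (n i : ℝ)) ≤ R}.ncard) : ℝ)
        = As N (k+1) R := by
    intro R
    rw [As]
    congr 1
    rw [← Set.ncard_coe_finset]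
    congr 1
    ext v
    simp only [Finset.coe_filter, Set.mem_setOf_eq, Finset.mem_coe, mem_Kfin hN]
  simp only [hfun, hsub]
  -- auxiliary limits
  have hh : Tendsto (fun R : ℝ => Bs N k (R/N) / (Real.log R)^k) atTop
      (nhds (1/(Nat.factorial k : ℝ))) := by
    have hdiv : Tendsto (fun R : ℝ => R/(N:ℝ)) atTop atTop :=
      tendsto_id.atTop_div_const hN0
    have hcomp1 : Tendsto (fun R : ℝ => Bs N k (R/N) / (Real.log (R/N))^k) atTop
        (nhds (1/(Nat.factorial k : ℝ))) := by
      have := (Bs_lim hN k).comp hdiv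
      exact this
    have hcomp2 : Tendsto (fun R : ℝ => (Real.log (R/N))^k / (Real.log R)^k) atTop
        (nhds 1) := by
      apply (tendsto_ratio (-Real.log (N:ℝ)) k).congr'
      filter_upwards [eventually_gt_atTop (0:ℝ)] with R hR
      rw [Real.log_div (ne_of_gt hR) (ne_of_gt hN0)]
      ring_nf
    have hmul := hcomp1.mul hcomp2
    rw [mul_one] at hmul
    apply hmul.congr'
    filter_upwards [eventually_gt_atTop (N:ℝ)] with R hR
    have hRN1 : (1:ℝ) < R/N := by
      rw [lt_div_iff₀ hN0]; linarith
    have hlg' : 0 < Real.log (R/N) := Real.log_pos hRN1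
    have hne : (Real.log (R/N))^k ≠ 0 := by positivity
    field_simp
  have herr := err_lim hN k
  have hg : Tendsto (fun R : ℝ => Bs N k (R/N) / (Real.log R)^k
      - (N:ℝ) * As N k (R/N) / (R * (Real.log R)^k)) atTop
      (nhds (1/(Nat.factorial k : ℝ))) := by
    have := hh.sub herr
    simpa using this
  -- sandwich
  apply tendsto_of_tendsto_of_tendsto_of_le_of_le' hg hh
  · filter_upwards [eventually_gt_atTop (1:ℝ)] with R hR
    have hR0 : (0:ℝ) < R := lt_trans one_pos hR
    have hlR : 0 < Real.log R := Real.log_pos hR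
    have hden : (0:ℝ) < R * (Real.log R)^k := by positivity
    have hAlo := As_lower (k := k) hN R
    have heq : Bs N k (R/N) / (Real.log R)^k
        - (N:ℝ) * As N k (R/N) / (R * (Real.log R)^k)
        = (R * Bs N k (R/N) - (N:ℝ) * As N k (R/N)) / (R * (Real.log R)^k) := by
      field_simp
    rw [heq]
    exact (div_le_div_iff_of_pos_right hden).mpr hAlo
  · filter_upwards [eventually_gt_atTop (1:ℝ)] with R hR
    have hR0 : (0:ℝ) < R := lt_trans one_pos hR
    have hlR : 0 < Real.log R := Real.log_pos hR
    have hden : (0:ℝ) < R * (Real.log R)^k := by positivity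
    have hAup := As_upper (k := k) hN R
    calc As N (k+1) R / (R * (Real.log R)^k)
        ≤ (R * Bs N k (R/N)) / (R * (Real.log R)^k) := (div_le_div_iff_of_pos_right hden).mpr hAup
      _ = Bs N k (R/N) / (Real.log R)^k := by
          rw [mul_div_mul_left _ _ (ne_of_gt hR0)]
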